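/- Under assumptions A1–A3 the inexact SGP method satisfies, for every N ≥ 1: min{‖wᵏ − xᵏ‖ : k = 0,…,N−1} ≤ √(2α_max μ [f(x⁰) − f* + Σₖ νₖ] / (στ_min)) · 1/√N. -/

import Mathlib

open RealInnerProductSpace

abbrev EucSp (n : ℕ) := EuclideanSpace ℝ (Fin n)

noncomputable def dipr {n : ℕ} (D : Matrix (Fin n) (Fin n) ℝ) (x y : EucSp n) : ℝ :=
  ⟪(Matrix.toEuclideanLin D) x, y⟫

noncomputable def dnorm {n : ℕ} (D : Matrix (Fin n) (Fin n) ℝ) (x : EucSp n) : ℝ :=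
  Real.sqrt (dipr D x x)

theorem stmt16 {n : ℕ} (C : Set (EucSp n)) (hcl : IsClosed C) (hconv : Convex ℝ C)
    (f : EucSp n → ℝ) (g : EucSp n → EucSp n) (hf : ∀ x, HasGradientAt f (g x) x)
    (μ σ αmax τmin fstar : ℝ) (hμ : 1 ≤ μ) (hσ : 0 < σ ∧ σ < 1)
    (hαmax : 0 < αmax) (hτmin : 0 < τmin)
    (hfstar : ∀ x ∈ C, fstar ≤ f x)
    (τ ν : ℕ → ℝ) (hτ : ∀ k, τmin ≤ τ k ∧ τ k ≤ 1) (hν : ∀ k, 0 ≤ ν k)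
    (hνsum : Summable ν)
    (X w : ℕ → EucSp n) (hXC : ∀ k, X k ∈ C)
    (hkey : ∀ k, ⟪g (X k), w k - X k⟫ ≤ -(1 / (2 * αmax * μ)) * ‖w k - X k‖ ^ 2)
    (hls : ∀ k, f (X (k + 1)) ≤ f (X k) + σ * τ k * ⟪g (X k), w k - X k⟫ + ν k) :
    ∀ N : ℕ, 1 ≤ N → ∃ k < N, ‖w k - X k‖ ≤
      Real.sqrt (2 * αmax * μ * (f (X 0) - fstar + ∑' k, ν k) / (σ * τmin)) *
        (1 / Real.sqrt N) := by
  intro N hN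
  obtain ⟨hσ0, hσ1⟩ := hσ
  have hμ0 : (0:ℝ) < μ := lt_of_lt_of_le one_pos hμ
  set c : ℝ := 1 / (2 * αmax * μ) with hc
  have hc0 : 0 < c := by positivity
  -- per-step decrease
  have hstep : ∀ k, f (X (k + 1)) ≤ f (X k) - σ * τmin * c * ‖w k - X k‖ ^ 2 + ν k := by
    intro k
    have hτk := hτ k
    have hkey' := hkey k
    have hneg : ⟪g (X k), w k - X k⟫ ≤ 0 := by
      refine le_trans hkey' ?_
      have : 0 ≤ c * ‖w k - X k‖ ^ 2 := by positivity
      linarith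
    have h1 : σ * τ k * ⟪g (X k), w k - X k⟫ ≤ σ * τmin * ⟪g (X k), w k - X k⟫ := by
      have hστ : σ * τmin ≤ σ * τ k :=
        mul_le_mul_of_nonneg_left hτk.1 (le_of_lt hσ0)
      nlinarith
    have h2 : σ * τmin * ⟪g (X k), w k - X k⟫ ≤ σ * τmin * (-(c) * ‖w k - X k‖ ^ 2) := by
      have := mul_le_mul_of_nonneg_left hkey' (by positivity : (0:ℝ) ≤ σ * τmin)
      linarith [this]
    have := hls k
    nlinarith
  -- telescoping sum
  have hsum : ∀ M : ℕ, f (X M) + σ * τmin * c * ∑ k ∈ Finset.range M, ‖w k - X k‖ ^ 2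
      ≤ f (X 0) + ∑ k ∈ Finset.range M, ν k := by
    intro M
    induction M with
    | zero => simp
    | succ m ih =>
      rw [Finset.sum_range_succ, Finset.sum_range_succ]
      have := hstep m
      nlinarith
  have hνpart : ∀ M : ℕ, ∑ k ∈ Finset.range M, ν k ≤ ∑' k, ν k := by
    intro M
    exact hνsum.sum_le_tsum _ (fun k _ => hν k)
  set B : ℝ := f (X 0) - fstar + ∑' k, ν k with hB
  have hmain : σ * τmin * c * ∑ k ∈ Finset.range N, ‖w k - X k‖ ^ 2 ≤ B := by
    have h1 := hsum N
    have h2 := hνpart N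
    have h3 := hfstar (X N) (hXC N)
    simp only [hB]; linarith
  -- pick minimizer
  obtain ⟨k₀, hk₀N, hk₀min⟩ := Finset.exists_min_image (Finset.range N)
    (fun k => ‖w k - X k‖) ⟨0, Finset.mem_range.mpr hN⟩
  rw [Finset.mem_range] at hk₀N
  refine ⟨k₀, hk₀N, ?_⟩
  have hNsum : (N : ℝ) * ‖w k₀ - X k₀‖ ^ 2 ≤ ∑ k ∈ Finset.range N, ‖w k - X k‖ ^ 2 := by
    have : ∀ k ∈ Finset.range N, ‖w k₀ - X k₀‖ ^ 2 ≤ ‖w k - X k‖ ^ 2 := by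
      intro k hk
      have := hk₀min k hk
      have h0 : 0 ≤ ‖w k₀ - X k₀‖ := norm_nonneg _
      nlinarith
    calc (N : ℝ) * ‖w k₀ - X k₀‖ ^ 2
        = ∑ _k ∈ Finset.range N, ‖w k₀ - X k₀‖ ^ 2 := by
          rw [Finset.sum_const, Finset.card_range, nsmul_eq_mul]
      _ ≤ ∑ k ∈ Finset.range N, ‖w k - X k‖ ^ 2 := Finset.sum_le_sum this
  have hNpos : (0:ℝ) < N := by exact_mod_cast hN
  set A : ℝ := 2 * αmax * μ * B / (σ * τmin) with hA
  have hστc : σ * τmin * c > 0 := by positivity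
  have hsumnn : 0 ≤ ∑ k ∈ Finset.range N, ‖w k - X k‖ ^ 2 :=
    Finset.sum_nonneg fun k _ => by positivity
  have hBnn : 0 ≤ B := by nlinarith
  have hAnn : 0 ≤ A := by positivity
  have hkey2 : ‖w k₀ - X k₀‖ ^ 2 ≤ A / N := by
    rw [hA, div_div, le_div_iff₀ (by positivity)]
    have hce : c * (2 * αmax * μ) = 1 := by
      rw [hc, one_div, inv_mul_cancel₀ (by positivity)]
    nlinarith [hmain, hNsum, mul_le_mul_of_nonneg_left hNsum (le_of_lt hστc)]
  have : ‖w k₀ - X k₀‖ ≤ Real.sqrt (A / N) := by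
    rw [Real.le_sqrt (norm_nonneg _) (div_nonneg hAnn (le_of_lt hNpos))]; exact hkey2
  calc ‖w k₀ - X k₀‖ ≤ Real.sqrt (A / N) := this
    _ = Real.sqrt A * (1 / Real.sqrt N) := by
        rw [Real.sqrt_div hAnn, div_eq_mul_one_div]
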